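/- Let H = [[A, B], [C, D]] be a constant block (m+n)×(m+n) matrix with (H − H*)/(2i) ⪰ 0 and D of size n×n, and let Z_n = diag(I_{n₀}, z₁I_{n₁}, …, z_dI_{n_d}) with n₀ + n₁ + ⋯ + n_d = n. If I_n − DZ_n is invertible for every z ∈ Π^d, then f(z) = A + BZ_n(I_n − DZ_n)⁻¹C belongs to the Pick class 𝒫_d^{m×m}; indeed (f(z) − f(z)*)/(2i) = (I_m, −C*(D − Z_n⁻¹)⁻¹*) · (H − H*)/(2i) · (I_m; −(D − Z_n⁻¹)⁻¹C) + C*(I − DZ_n)⁻¹* · (Z_n − Z_n*)/(2i) · (I − DZ_n)⁻¹C whenever all inverses exist. -/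

import Mathlib

open Matrix MvPolynomial
open scoped ComplexOrder

noncomputable section

/-- The open upper poly-half-plane `Π^d` (coordinates indexed by `ι`). -/
def UHP (ι : Type*) : Set (ι → ℂ) := {z | ∀ k, 0 < (z k).im}

/-- `(M - Mᴴ)/(2i)`. -/
def imPart {n : Type*} (M : Matrix n n ℂ) : Matrix n n ℂ :=
  (2 * Complex.I)⁻¹ • (M - Mᴴ)

/-- Index type realizing `n = n₀ + n₁ + ⋯ + n_d`. -/
abbrev ZIdx {d : ℕ} (n : Fin (d + 1) → ℕ) : Type := (k : Fin (d + 1)) × Fin (n k)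

/-- `Z_n = diag(I_{n₀}, z₁ I_{n₁}, …, z_d I_{n_d})`. -/
def ZOne {d : ℕ} (n : Fin (d + 1) → ℕ) (z : Fin d → ℂ) : Matrix (ZIdx n) (ZIdx n) ℂ :=
  Matrix.diagonal fun p => Fin.cases (1 : ℂ) (fun j => z j) p.1

section Aux

variable {mt nt : Type*} [Fintype mt] [Fintype nt] [DecidableEq mt] [DecidableEq nt]

lemma inner_identity
    (A : Matrix mt mt ℂ) (B : Matrix mt nt ℂ) (C : Matrix nt mt ℂ)
    (E W Z Zi : Matrix nt nt ℂ)
    (hZZi : Z * Zi = 1) (hZiZ : Zi * Z = 1) (hEW : E * W = 1) (hWE : W * E = 1) :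
    (A + B * Z * (-(Zi * W)) * C) - (A + B * Z * (-(Zi * W)) * C)ᴴ =
      (((1 : Matrix mt mt ℂ) * (A - Aᴴ) + (-(W * C))ᴴ * (C - Bᴴ)) * 1 +
        ((1 : Matrix mt mt ℂ) * (B - Cᴴ) + (-(W * C))ᴴ * ((E + Zi) - (E + Zi)ᴴ)) * (-(W * C))) +
      Cᴴ * (-(Zi * W))ᴴ * (Z - Zᴴ) * (-(Zi * W)) * C := by
  have hZZi' : Ziᴴ * Zᴴ = 1 := by rw [← conjTranspose_mul, hZZi, conjTranspose_one]
  have hZiZ' : Zᴴ * Ziᴴ = 1 := by rw [← conjTranspose_mul, hZiZ, conjTranspose_one]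
  have hEW' : Wᴴ * Eᴴ = 1 := by rw [← conjTranspose_mul, hEW, conjTranspose_one]
  have hWE' : Eᴴ * Wᴴ = 1 := by rw [← conjTranspose_mul, hWE, conjTranspose_one]
  have c1 : ∀ (X : Matrix nt mt ℂ), Z * (Zi * X) = X := fun X => by
    rw [← Matrix.mul_assoc, hZZi, Matrix.one_mul]
  have c2 : ∀ (X : Matrix nt mt ℂ), Zi * (Z * X) = X := fun X => by
    rw [← Matrix.mul_assoc, hZiZ, Matrix.one_mul]
  have c3 : ∀ (X : Matrix nt mt ℂ), E * (W * X) = X := fun X => by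
    rw [← Matrix.mul_assoc, hEW, Matrix.one_mul]
  have c4 : ∀ (X : Matrix nt mt ℂ), W * (E * X) = X := fun X => by
    rw [← Matrix.mul_assoc, hWE, Matrix.one_mul]
  have c5 : ∀ (X : Matrix nt mt ℂ), Ziᴴ * (Zᴴ * X) = X := fun X => by
    rw [← Matrix.mul_assoc, hZZi', Matrix.one_mul]
  have c6 : ∀ (X : Matrix nt mt ℂ), Zᴴ * (Ziᴴ * X) = X := fun X => by
    rw [← Matrix.mul_assoc, hZiZ', Matrix.one_mul]
  have c7 : ∀ (X : Matrix nt mt ℂ), Wᴴ * (Eᴴ * X) = X := fun X => by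
    rw [← Matrix.mul_assoc, hEW', Matrix.one_mul]
  have c8 : ∀ (X : Matrix nt mt ℂ), Eᴴ * (Wᴴ * X) = X := fun X => by
    rw [← Matrix.mul_assoc, hWE', Matrix.one_mul]
  simp only [conjTranspose_add, conjTranspose_sub, conjTranspose_mul, conjTranspose_neg,
    conjTranspose_one, conjTranspose_conjTranspose, Matrix.mul_one, Matrix.one_mul,
    Matrix.mul_sub, Matrix.sub_mul, Matrix.mul_add, Matrix.add_mul, Matrix.neg_mul,
    Matrix.mul_neg, neg_neg, Matrix.mul_assoc, c1, c2, c3, c4, c5, c6, c7, c8]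
  abel

lemma key_identity
    (A : Matrix mt mt ℂ) (B : Matrix mt nt ℂ) (C : Matrix nt mt ℂ) (D Z : Matrix nt nt ℂ)
    (hZ : IsUnit Z) (h2 : IsUnit (D - Z⁻¹)) :
    (2 * Complex.I)⁻¹ • ((A + B * Z * ((1 : Matrix nt nt ℂ) - D * Z)⁻¹ * C)
        - (A + B * Z * ((1 : Matrix nt nt ℂ) - D * Z)⁻¹ * C)ᴴ) =
      (Matrix.fromRows (1 : Matrix mt mt ℂ) (-((D - Z⁻¹)⁻¹ * C)))ᴴ *
          imPart (Matrix.fromBlocks A B C D) *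
        Matrix.fromRows (1 : Matrix mt mt ℂ) (-((D - Z⁻¹)⁻¹ * C)) +
      Cᴴ * (((1 : Matrix nt nt ℂ) - D * Z)⁻¹)ᴴ * ((2 * Complex.I)⁻¹ • (Z - Zᴴ)) *
        ((1 : Matrix nt nt ℂ) - D * Z)⁻¹ * C := by
  set W := (D - Z⁻¹)⁻¹ with hWdef
  have hZd := (Matrix.isUnit_iff_isUnit_det Z).mp hZ
  have h2d := (Matrix.isUnit_iff_isUnit_det _).mp h2
  have hZZi : Z * Z⁻¹ = 1 := Matrix.mul_nonsing_inv Z hZd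
  have hZiZ : Z⁻¹ * Z = 1 := Matrix.nonsing_inv_mul Z hZd
  have hEW : (D - Z⁻¹) * W = 1 := Matrix.mul_nonsing_inv _ h2d
  have hWE : W * (D - Z⁻¹) = 1 := Matrix.nonsing_inv_mul _ h2d
  have hG : ((1 : Matrix nt nt ℂ) - D * Z)⁻¹ = -(Z⁻¹ * W) := by
    apply Matrix.inv_eq_right_inv
    calc ((1 : Matrix nt nt ℂ) - D * Z) * -(Z⁻¹ * W)
        = D * (Z * Z⁻¹) * W - Z⁻¹ * W := by noncomm_ring
      _ = (D - Z⁻¹) * W := by rw [hZZi]; noncomm_ring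
      _ = 1 := hEW
  have hD : D = (D - Z⁻¹) + Z⁻¹ := by rw [sub_add_cancel]
  rw [hG]
  rw [imPart, conjTranspose_fromRows_eq_fromCols_conjTranspose, fromBlocks_conjTranspose]
  have hsub : Matrix.fromBlocks A B C D - Matrix.fromBlocks Aᴴ Cᴴ Bᴴ Dᴴ =
      Matrix.fromBlocks (A - Aᴴ) (B - Cᴴ) (C - Bᴴ) (D - Dᴴ) := by
    ext (i | i) (j | j) <;> simp
  rw [hsub]
  simp only [Matrix.mul_smul, Matrix.smul_mul, ← smul_add]
  congr 1
  rw [fromCols_mul_fromBlocks, fromCols_mul_fromRows, conjTranspose_one, hD]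
  exact inner_identity A B C (D - Z⁻¹) W Z Z⁻¹ hZZi hZiZ hEW hWE

lemma diffProd {d : ℕ} {ι : Type*} (s : Finset ι) (g : ι → (Fin d → ℂ) → ℂ)
    (hg : ∀ i, Differentiable ℂ (g i)) :
    Differentiable ℂ (fun z => ∏ i ∈ s, g i z) := by
  classical
  induction s using Finset.induction_on with
  | empty => simpa using differentiable_const (1 : ℂ)
  | insert _ _ h ih =>
    simp only [Finset.prod_insert h]
    exact (hg _).mul ih

lemma diffDet {d : ℕ} {ι : Type*} [Fintype ι] [DecidableEq ι]
    (M : (Fin d → ℂ) → Matrix ι ι ℂ)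
    (hM : ∀ i j, Differentiable ℂ fun z => M z i j) :
    Differentiable ℂ fun z => (M z).det := by
  have h : (fun z => (M z).det) =
      fun z => ∑ σ : Equiv.Perm ι, Equiv.Perm.sign σ * ∏ i, M z (σ i) i :=
    funext fun z => Matrix.det_apply' (M z)
  rw [h]
  exact Differentiable.fun_sum fun σ _ =>
    (diffProd Finset.univ (fun i z => M z (σ i) i) fun i => hM (σ i) i).const_mul _

lemma diffOn_mul_entry {d : ℕ} {ι κ τ : Type*} [Fintype κ] {s : Set (Fin d → ℂ)}
    {M : (Fin d → ℂ) → Matrix ι κ ℂ} {N : (Fin d → ℂ) → Matrix κ τ ℂ}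
    (hM : ∀ i j, DifferentiableOn ℂ (fun z => M z i j) s)
    (hN : ∀ i j, DifferentiableOn ℂ (fun z => N z i j) s) :
    ∀ i j, DifferentiableOn ℂ (fun z => (M z * N z) i j) s := by
  intro i j
  have h : (fun z => (M z * N z) i j) = fun z => ∑ k, M z i k * N z k j :=
    funext fun z => Matrix.mul_apply
  rw [h]
  exact DifferentiableOn.fun_sum fun k _ => (hM i k).mul (hN k j)

lemma diffZ {d : ℕ} (n : Fin (d + 1) → ℕ) (p q : ZIdx n) :
    Differentiable ℂ fun z : Fin d → ℂ => ZOne n z p q := by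
  unfold ZOne
  rcases eq_or_ne p q with h | h
  · subst h
    simp only [Matrix.diagonal_apply_eq]
    obtain ⟨k, i⟩ := p
    induction k using Fin.cases with
    | zero => simpa using differentiable_const (1 : ℂ)
    | succ j =>
      simp only [Fin.cases_succ]
      exact (ContinuousLinearMap.proj j : (Fin d → ℂ) →L[ℂ] ℂ).differentiable
  · simp only [Matrix.diagonal_apply_ne _ h]
    exact differentiable_const 0

end Aux

/-- the transfer-function realisation
`f(z) = A + B Z_n (I - D Z_n)⁻¹ C` with `(H-H*)/(2i) ⪰ 0` belongs to the Pick class,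
together with the identity for `(f(z)-f(z)*)/(2i)`. -/
theorem pick_from_transfer_realization (d m : ℕ) (n : Fin (d + 1) → ℕ)
    (H : Matrix (Fin m ⊕ ZIdx n) (Fin m ⊕ ZIdx n) ℂ)
    (hH : (imPart H).PosSemidef)
    (hinv : ∀ z ∈ UHP (Fin d), IsUnit ((1 : Matrix (ZIdx n) (ZIdx n) ℂ) - H.toBlocks₂₂ * ZOne n z))
    (f : (Fin d → ℂ) → Matrix (Fin m) (Fin m) ℂ)
    (hf : ∀ z, f z = H.toBlocks₁₁ + H.toBlocks₁₂ * ZOne n z *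
      ((1 : Matrix (ZIdx n) (ZIdx n) ℂ) - H.toBlocks₂₂ * ZOne n z)⁻¹ * H.toBlocks₂₁) :
    (∀ i j, DifferentiableOn ℂ (fun z => f z i j) (UHP (Fin d))) ∧
    (∀ z ∈ UHP (Fin d), (imPart (f z)).PosSemidef) ∧
    (∀ z : Fin d → ℂ, IsUnit (ZOne n z) →
      IsUnit ((1 : Matrix (ZIdx n) (ZIdx n) ℂ) - H.toBlocks₂₂ * ZOne n z) →
      IsUnit (H.toBlocks₂₂ - (ZOne n z)⁻¹) →
      (2 * Complex.I)⁻¹ • (f z - (f z)ᴴ) =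
        (Matrix.fromRows (1 : Matrix (Fin m) (Fin m) ℂ)
            (-((H.toBlocks₂₂ - (ZOne n z)⁻¹)⁻¹ * H.toBlocks₂₁)))ᴴ * imPart H *
          Matrix.fromRows (1 : Matrix (Fin m) (Fin m) ℂ)
            (-((H.toBlocks₂₂ - (ZOne n z)⁻¹)⁻¹ * H.toBlocks₂₁)) +
        H.toBlocks₂₁ᴴ * (((1 : Matrix (ZIdx n) (ZIdx n) ℂ) - H.toBlocks₂₂ * ZOne n z)⁻¹)ᴴ *
          ((2 * Complex.I)⁻¹ • (ZOne n z - (ZOne n z)ᴴ)) *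
          ((1 : Matrix (ZIdx n) (ZIdx n) ℂ) - H.toBlocks₂₂ * ZOne n z)⁻¹ * H.toBlocks₂₁) := by
  classical
  -- Part 3: the algebraic identity.
  have part3 : ∀ z : Fin d → ℂ, IsUnit (ZOne n z) →
      IsUnit ((1 : Matrix (ZIdx n) (ZIdx n) ℂ) - H.toBlocks₂₂ * ZOne n z) →
      IsUnit (H.toBlocks₂₂ - (ZOne n z)⁻¹) →
      (2 * Complex.I)⁻¹ • (f z - (f z)ᴴ) =
        (Matrix.fromRows (1 : Matrix (Fin m) (Fin m) ℂ)
            (-((H.toBlocks₂₂ - (ZOne n z)⁻¹)⁻¹ * H.toBlocks₂₁)))ᴴ * imPart H *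
          Matrix.fromRows (1 : Matrix (Fin m) (Fin m) ℂ)
            (-((H.toBlocks₂₂ - (ZOne n z)⁻¹)⁻¹ * H.toBlocks₂₁)) +
        H.toBlocks₂₁ᴴ * (((1 : Matrix (ZIdx n) (ZIdx n) ℂ) - H.toBlocks₂₂ * ZOne n z)⁻¹)ᴴ *
          ((2 * Complex.I)⁻¹ • (ZOne n z - (ZOne n z)ᴴ)) *
          ((1 : Matrix (ZIdx n) (ZIdx n) ℂ) - H.toBlocks₂₂ * ZOne n z)⁻¹ * H.toBlocks₂₁ := by
    intro z hZu _ h2u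
    rw [hf z]
    have key := key_identity H.toBlocks₁₁ H.toBlocks₁₂ H.toBlocks₂₁ H.toBlocks₂₂
      (ZOne n z) hZu h2u
    rwa [fromBlocks_toBlocks] at key
  refine ⟨?_, ?_, part3⟩
  · -- differentiability
    intro i j
    have hfe : (fun z => f z i j) = fun z =>
        (H.toBlocks₁₁ + H.toBlocks₁₂ * ZOne n z *
          ((1 : Matrix (ZIdx n) (ZIdx n) ℂ) - H.toBlocks₂₂ * ZOne n z)⁻¹ * H.toBlocks₂₁) i j :=
      funext fun z => by rw [hf z]
    rw [hfe]
    simp only [Matrix.add_apply]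
    have hMent : ∀ p q, Differentiable ℂ fun z =>
        ((1 : Matrix (ZIdx n) (ZIdx n) ℂ) - H.toBlocks₂₂ * ZOne n z) p q := by
      intro p q
      have h : (fun z => ((1 : Matrix (ZIdx n) (ZIdx n) ℂ) - H.toBlocks₂₂ * ZOne n z) p q) =
          fun z => (1 : Matrix (ZIdx n) (ZIdx n) ℂ) p q -
            ∑ r, H.toBlocks₂₂ p r * ZOne n z r q :=
        funext fun z => by rw [Matrix.sub_apply, Matrix.mul_apply]
      rw [h]
      exact (differentiable_const _).sub
        (Differentiable.fun_sum fun r _ => (diffZ n r q).const_mul _)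
    have hMinv : ∀ a b, DifferentiableOn ℂ
        (fun z => ((1 : Matrix (ZIdx n) (ZIdx n) ℂ) - H.toBlocks₂₂ * ZOne n z)⁻¹ a b)
        (UHP (Fin d)) := by
      intro a b
      have hdet : Differentiable ℂ fun z =>
          ((1 : Matrix (ZIdx n) (ZIdx n) ℂ) - H.toBlocks₂₂ * ZOne n z).det :=
        diffDet _ hMent
      have hadj : Differentiable ℂ fun z =>
          ((1 : Matrix (ZIdx n) (ZIdx n) ℂ) - H.toBlocks₂₂ * ZOne n z).adjugate a b := by
        have h : (fun z =>
            ((1 : Matrix (ZIdx n) (ZIdx n) ℂ) - H.toBlocks₂₂ * ZOne n z).adjugate a b) =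
            fun z => (((1 : Matrix (ZIdx n) (ZIdx n) ℂ) - H.toBlocks₂₂ * ZOne n z).updateRow b
              (Pi.single a 1)).det :=
          funext fun z => Matrix.adjugate_apply _ a b
        rw [h]
        apply diffDet
        intro p q
        by_cases hp : p = b
        · simp only [Matrix.updateRow_apply, hp, if_true]
          exact differentiable_const _
        · simp only [Matrix.updateRow_apply, hp, if_false]
          exact hMent p q
      have hne : ∀ z ∈ UHP (Fin d),
          ((1 : Matrix (ZIdx n) (ZIdx n) ℂ) - H.toBlocks₂₂ * ZOne n z).det ≠ 0 :=
        fun z hz => ((Matrix.isUnit_iff_isUnit_det _).mp (hinv z hz)).ne_zero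
      have h : (fun z => ((1 : Matrix (ZIdx n) (ZIdx n) ℂ) - H.toBlocks₂₂ * ZOne n z)⁻¹ a b) =
          fun z => (((1 : Matrix (ZIdx n) (ZIdx n) ℂ) - H.toBlocks₂₂ * ZOne n z).det)⁻¹ *
            ((1 : Matrix (ZIdx n) (ZIdx n) ℂ) - H.toBlocks₂₂ * ZOne n z).adjugate a b :=
        funext fun z => by
          rw [Matrix.inv_def, Matrix.smul_apply, Ring.inverse_eq_inv, smul_eq_mul]
      rw [h]
      exact (hdet.differentiableOn.inv hne).mul hadj.differentiableOn
    have hB : ∀ (i' : Fin m) (q : ZIdx n), DifferentiableOn ℂ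
        (fun _ : Fin d → ℂ => H.toBlocks₁₂ i' q) (UHP (Fin d)) :=
      fun _ _ => differentiableOn_const _
    have hC : ∀ (q : ZIdx n) (j' : Fin m), DifferentiableOn ℂ
        (fun _ : Fin d → ℂ => H.toBlocks₂₁ q j') (UHP (Fin d)) :=
      fun _ _ => differentiableOn_const _
    have hZd : ∀ p q : ZIdx n, DifferentiableOn ℂ (fun z => ZOne n z p q) (UHP (Fin d)) :=
      fun p q => (diffZ n p q).differentiableOn
    exact (differentiableOn_const _).add
      (diffOn_mul_entry (diffOn_mul_entry (diffOn_mul_entry hB hZd) hMinv) hC i j)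
  · -- positivity
    intro z hz
    have hznz : ∀ j, z j ≠ 0 := fun j h => by simpa [h] using hz j
    have hvnz : ∀ p : ZIdx n,
        (Fin.cases (motive := fun _ => ℂ) 1 (fun j => z j) p.1) ≠ 0 := by
      rintro ⟨k, i⟩
      induction k using Fin.cases with
      | zero => simp
      | succ j => simpa using hznz j
    have hZu : IsUnit (ZOne n z) := by
      rw [ZOne, Matrix.isUnit_diagonal]
      exact IsUnit.of_mul_eq_one
        (fun p => (Fin.cases (motive := fun _ => ℂ) 1 (fun j => z j) p.1)⁻¹)
        (funext fun p => mul_inv_cancel₀ (hvnz p))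
    have h1u := hinv z hz
    have hZiu : IsUnit (ZOne n z)⁻¹ := Matrix.isUnit_nonsing_inv_iff.mpr hZu
    have h2u : IsUnit (H.toBlocks₂₂ - (ZOne n z)⁻¹) := by
      have e : H.toBlocks₂₂ - (ZOne n z)⁻¹ =
          -(((1 : Matrix (ZIdx n) (ZIdx n) ℂ) - H.toBlocks₂₂ * ZOne n z) * (ZOne n z)⁻¹) := by
        rw [Matrix.sub_mul, Matrix.one_mul, Matrix.mul_assoc,
          Matrix.mul_nonsing_inv _ ((Matrix.isUnit_iff_isUnit_det _).mp hZu),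
          Matrix.mul_one, neg_sub]
      rw [e]
      exact (h1u.mul hZiu).neg
    have hid := part3 z hZu h1u h2u
    rw [show imPart (f z) = (2 * Complex.I)⁻¹ • (f z - (f z)ᴴ) from rfl, hid]
    apply Matrix.PosSemidef.add
    · exact hH.conjTranspose_mul_mul_same _
    · have hSdiag : (2 * Complex.I)⁻¹ • (ZOne n z - (ZOne n z)ᴴ) =
          Matrix.diagonal (fun p : ZIdx n => (2 * Complex.I)⁻¹ *
            ((Fin.cases (1 : ℂ) (fun j => z j) p.1) -
              (starRingEnd ℂ) (Fin.cases (1 : ℂ) (fun j => z j) p.1))) := by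
        ext p q
        by_cases hpq : p = q
        · subst hpq
          simp [ZOne, Matrix.smul_apply, Matrix.sub_apply, Matrix.conjTranspose_apply,
            Matrix.diagonal_apply_eq]
        · simp [ZOne, Matrix.smul_apply, Matrix.sub_apply, Matrix.conjTranspose_apply,
            Matrix.diagonal_apply_ne _ hpq, Matrix.diagonal_apply_ne _ fun h => hpq h.symm]
      have hS : ((2 * Complex.I)⁻¹ • (ZOne n z - (ZOne n z)ᴴ)).PosSemidef := by
        rw [hSdiag]
        refine Matrix.posSemidef_diagonal_iff.mpr ?_
        rintro ⟨k, i⟩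
        induction k using Fin.cases with
        | zero => simp
        | succ j =>
          simp only [Fin.cases_succ]
          have hc : (2 * Complex.I)⁻¹ * (z j - (starRingEnd ℂ) (z j)) = ((z j).im : ℂ) := by
            rw [Complex.sub_conj]
            have h2I : (2 : ℂ) * Complex.I ≠ 0 := by
              simp [Complex.I_ne_zero]
            field_simp
            push_cast
            ring
          rw [hc]
          exact_mod_cast Complex.zero_le_real.mpr (hz j).le
      have e : H.toBlocks₂₁ᴴ * (((1 : Matrix (ZIdx n) (ZIdx n) ℂ) - H.toBlocks₂₂ * ZOne n z)⁻¹)ᴴ *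
          ((2 * Complex.I)⁻¹ • (ZOne n z - (ZOne n z)ᴴ)) *
          ((1 : Matrix (ZIdx n) (ZIdx n) ℂ) - H.toBlocks₂₂ * ZOne n z)⁻¹ * H.toBlocks₂₁ =
          (((1 : Matrix (ZIdx n) (ZIdx n) ℂ) - H.toBlocks₂₂ * ZOne n z)⁻¹ * H.toBlocks₂₁)ᴴ *
          ((2 * Complex.I)⁻¹ • (ZOne n z - (ZOne n z)ᴴ)) *
          (((1 : Matrix (ZIdx n) (ZIdx n) ℂ) - H.toBlocks₂₂ * ZOne n z)⁻¹ * H.toBlocks₂₁) := by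
        rw [conjTranspose_mul, Matrix.mul_assoc]
      rw [e]
      exact hS.conjTranspose_mul_mul_same _
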